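/- A finite chordal graph G contains no clique on p vertices (is K_p-free) if and only if G is properly colorable with p − 1 colors. -/

import Mathlib

/-- `G` is chordal: it has no induced cycle of length at least 4. -/
def SimpleGraph.IsChordal {V : Type} (G : SimpleGraph V) : Prop :=
  ∀ n : ℕ, 4 ≤ n → ¬ Nonempty (SimpleGraph.cycleGraph n ↪g G)

namespace Chordal19

open SimpleGraph Walk


variable {V : Type} {G : SimpleGraph V}

/-- Take the first `n` darts of a walk. -/
def wtake {u v : V} : (p : G.Walk u v) → (n : ℕ) → G.Walk u (p.getVert n)
  | Walk.nil, _ => Walk.nil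
  | Walk.cons _ _, 0 => Walk.nil
  | Walk.cons h q, (n+1) => Walk.cons h (wtake q n)

lemma length_wtake {u v : V} (p : G.Walk u v) (n : ℕ) (hn : n ≤ p.length) :
    (wtake p n).length = n := by
  induction p generalizing n with
  | nil => simp at hn; simp [hn, wtake]
  | cons h q ih =>
    cases n with
    | zero => rfl
    | succ n =>
      simp only [Walk.length_cons] at hn
      simpa [wtake] using ih n (by omega)

lemma support_wtake_subset {u v : V} (p : G.Walk u v) (n : ℕ) :
    (wtake p n).support ⊆ p.support := by
  induction p generalizing n with
  | nil => cases n <;> simp [wtake]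
  | cons h q ih =>
    cases n with
    | zero => intro x hx; simp [wtake, Walk.support] at hx; simp [hx]
    | succ n =>
      intro x hx
      simp only [wtake, Walk.support_cons, Walk.support, List.mem_cons] at hx ⊢
      rcases hx with rfl | hx
      · exact Or.inl rfl
      · exact Or.inr (ih n hx)

lemma length_drop {u v : V} (p : G.Walk u v) (n : ℕ) :
    (p.drop n).length = p.length - n := by
  induction p generalizing n with
  | nil => cases n <;> simp [Walk.drop]
  | cons h q ih =>
    cases n with
    | zero => simp [Walk.drop]
    | succ n => simpa [Walk.drop] using ih n

lemma support_drop_subset {u v : V} (p : G.Walk u v) (n : ℕ) :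
    (p.drop n).support ⊆ p.support := by
  induction p generalizing n with
  | nil => cases n <;> simp [Walk.drop, Walk.getVert]
  | cons h q ih =>
    cases n with
    | zero => simp [Walk.drop]
    | succ n =>
      intro x hx
      simp only [Walk.drop, Walk.support_copy] at hx
      simp only [Walk.support_cons, List.mem_cons]
      exact Or.inr (ih n hx)

/-- splice out a repeated vertex -/
lemma splice_eq {u v : V} (p : G.Walk u v) {i j : ℕ} (hij : i ≤ j) (hj : j ≤ p.length)
    (h : p.getVert i = p.getVert j) :
    ∃ q : G.Walk u v, q.length = p.length - (j - i) ∧ q.support ⊆ p.support := by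
  refine ⟨(wtake p i).append ((p.drop j).copy h.symm rfl), ?_, ?_⟩
  · rw [Walk.length_append, Walk.length_copy, length_wtake _ _ (le_trans hij hj), length_drop]
    omega
  · intro x hx
    rw [Walk.mem_support_append_iff] at hx
    rcases hx with hx | hx
    · exact support_wtake_subset p i hx
    · rw [Walk.support_copy] at hx
      exact support_drop_subset p j hx

/-- splice using a chord -/
lemma splice_adj {u v : V} (p : G.Walk u v) {i j : ℕ} (hij : i + 1 < j) (hj : j ≤ p.length)
    (h : G.Adj (p.getVert i) (p.getVert j)) :
    ∃ q : G.Walk u v, q.length < p.length ∧ q.support ⊆ p.support := by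
  refine ⟨(wtake p i).append (Walk.cons h (p.drop j)), ?_, ?_⟩
  · rw [Walk.length_append, Walk.length_cons, length_wtake _ _ (by omega), length_drop]
    omega
  · intro x hx
    rw [Walk.mem_support_append_iff] at hx
    rcases hx with hx | hx
    · exact support_wtake_subset p i hx
    · rw [Walk.support_cons, List.mem_cons] at hx
      rcases hx with rfl | hx
      · exact Walk.mem_support_iff_exists_getVert.2 ⟨i, rfl, by omega⟩
      · exact support_drop_subset p j hx

/-- minimal-length walk with support in `W`: is injective and chord-free. -/
lemma exists_minWalk {W : Set V} {x y : V}
    (h : ∃ p : G.Walk x y, ∀ z ∈ p.support, z ∈ W) :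
    ∃ p : G.Walk x y, (∀ z ∈ p.support, z ∈ W) ∧
      (∀ i j : ℕ, i < j → j ≤ p.length → p.getVert i ≠ p.getVert j) ∧
      (∀ i j : ℕ, i + 1 < j → j ≤ p.length → ¬ G.Adj (p.getVert i) (p.getVert j)) := by
  classical
  set L : Set ℕ := {n | ∃ p : G.Walk x y, p.length = n ∧ ∀ z ∈ p.support, z ∈ W} with hL
  have hne : L.Nonempty := by
    obtain ⟨p, hp⟩ := h
    exact ⟨p.length, p, rfl, hp⟩
  obtain ⟨p, hplen, hpW⟩ := Nat.sInf_mem hne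
  have hmin : ∀ q : G.Walk x y, (∀ z ∈ q.support, z ∈ W) → p.length ≤ q.length := by
    intro q hq
    rw [hplen]
    exact Nat.sInf_le ⟨q, rfl, hq⟩
  refine ⟨p, hpW, ?_, ?_⟩
  · intro i j hij hj heq
    obtain ⟨q, hqlen, hqsub⟩ := splice_eq p (le_of_lt hij) hj heq
    have := hmin q (fun z hz => hpW z (hqsub hz))
    omega
  · intro i j hij hj hadj
    obtain ⟨q, hqlen, hqsub⟩ := splice_adj p hij hj hadj
    have := hmin q (fun z hz => hpW z (hqsub hz))
    omega




lemma path_adj_iff {x y : V} (p : G.Walk x y)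
    (hi : ∀ i j : ℕ, i < j → j ≤ p.length → p.getVert i ≠ p.getVert j)
    (hc : ∀ i j : ℕ, i + 1 < j → j ≤ p.length → ¬ G.Adj (p.getVert i) (p.getVert j))
    {i j : ℕ} (hil : i ≤ p.length) (hjl : j ≤ p.length) :
    G.Adj (p.getVert i) (p.getVert j) ↔ (j = i + 1 ∨ i = j + 1) := by
  constructor
  · intro hadj
    rcases lt_trichotomy i j with h | h | h
    · by_contra hcon
      push_neg at hcon
      exact hc i j (by omega) hjl hadj
    · subst h; exact absurd hadj (G.irrefl)
    · by_contra hcon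
      push_neg at hcon
      exact hc j i (by omega) hil hadj.symm
  · rintro (rfl | rfl)
    · exact p.adj_getVert_succ (by omega)
    · exact (p.adj_getVert_succ (by omega)).symm

lemma two_le_length {x y : V} (p : G.Walk x y) (hxy : x ≠ y) (hna : ¬ G.Adj x y) :
    2 ≤ p.length := by
  cases p with
  | nil => exact absurd rfl hxy
  | cons h q =>
    cases q with
    | nil => exact absurd h hna
    | cons h' q' => simp only [Walk.length_cons]; omega

lemma fin_consec {m : ℕ} (a b : Fin (m + 2)) :
    a - b = 1 ↔ (a.val = b.val + 1 ∨ (b.val = m + 1 ∧ a.val = 0)) := by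
  rw [sub_eq_iff_eq_add', Fin.ext_iff]
  rcases eq_or_ne b (Fin.last (m + 1)) with hb | hb
  · rw [Fin.val_add_one, if_pos hb]
    have hbv : b.val = m + 1 := by rw [hb]; rfl
    have hav : a.val < m + 2 := a.isLt
    constructor
    · intro h; right; omega
    · rintro (h | ⟨h1, h2⟩) <;> omega
  · rw [Fin.val_add_one, if_neg hb]
    have hbv : b.val ≠ m + 1 := fun h => hb (Fin.ext (by simpa using h))
    have hbv2 : b.val < m + 2 := b.isLt
    constructor
    · intro h; left; omega
    · rintro (h | ⟨h1, h2⟩) <;> omega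

lemma no_two_paths (hch : SimpleGraph.IsChordal G) {x y : V} (hxy : x ≠ y) (hnadj : ¬ G.Adj x y)
    (p₁ p₂ : G.Walk x y)
    (h₁i : ∀ i j : ℕ, i < j → j ≤ p₁.length → p₁.getVert i ≠ p₁.getVert j)
    (h₁c : ∀ i j : ℕ, i + 1 < j → j ≤ p₁.length → ¬ G.Adj (p₁.getVert i) (p₁.getVert j))
    (h₂i : ∀ i j : ℕ, i < j → j ≤ p₂.length → p₂.getVert i ≠ p₂.getVert j)
    (h₂c : ∀ i j : ℕ, i + 1 < j → j ≤ p₂.length → ¬ G.Adj (p₂.getVert i) (p₂.getVert j))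
    (hcne : ∀ i j : ℕ, 0 < i → i < p₁.length → 0 < j → j < p₂.length →
      p₁.getVert i ≠ p₂.getVert j)
    (hcna : ∀ i j : ℕ, 0 < i → i < p₁.length → 0 < j → j < p₂.length →
      ¬ G.Adj (p₁.getVert i) (p₂.getVert j)) : False := by
  have hr : 2 ≤ p₁.length := two_le_length p₁ hxy hnadj
  have hs : 2 ≤ p₂.length := two_le_length p₂ hxy hnadj
  obtain ⟨m, hm⟩ : ∃ m : ℕ, p₁.length + p₂.length = m + 2 := ⟨p₁.length + p₂.length - 2, by omega⟩
  set n := m + 2 with hn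
  have hnr : p₁.length ≤ n := by omega
  -- the cycle map
  set f : Fin n → V := fun i => if i.val ≤ p₁.length then p₁.getVert i.val
    else p₂.getVert (n - i.val) with hf
  have f_lo : ∀ i : Fin n, i.val ≤ p₁.length → f i = p₁.getVert i.val := by
    intro i hi; simp [hf, hi]
  have f_hi : ∀ i : Fin n, p₁.length ≤ i.val → f i = p₂.getVert (n - i.val) := by
    intro i hi
    rcases eq_or_lt_of_le hi with h | h
    · rw [f_lo i h.symm.le, ← h]
      have h1 : p₁.getVert p₁.length = y := p₁.getVert_length
      have h2 : n - p₁.length = p₂.length := by omega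
      rw [h1, h2, p₂.getVert_length]
    · simp [hf, Nat.not_le.mpr h]
  -- adjacency characterization, for a < b
  have key' : ∀ a b : Fin n, a.val < b.val →
      (G.Adj (f a) (f b) ↔ (b.val = a.val + 1 ∨ (a.val = 0 ∧ b.val = n - 1))) := by
    intro a b hab
    have hbn : b.val < n := b.isLt
    rcases le_or_gt b.val p₁.length with hb | hb
    · -- both on p₁
      rw [f_lo a (by omega), f_lo b hb,
        path_adj_iff p₁ h₁i h₁c (by omega) hb]
      omega
    · rcases le_or_gt p₁.length a.val with ha | ha
      · -- both on p₂
        rw [f_hi a ha, f_hi b (by omega),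
          path_adj_iff p₂ h₂i h₂c (by omega) (by omega)]
        omega
      · -- a on p₁ interior or 0, b on p₂ interior
        rw [f_lo a (by omega), f_hi b (by omega)]
        rcases Nat.eq_zero_or_pos a.val with ha0 | ha0
        · -- a = x
          have hx : p₁.getVert a.val = p₂.getVert 0 := by
            rw [ha0, p₁.getVert_zero, p₂.getVert_zero]
          rw [hx, path_adj_iff p₂ h₂i h₂c (by omega) (by omega)]
          omega
        · -- cross interiors: no adjacency
          constructor
          · intro h
            exact absurd h (hcna a.val (n - b.val) ha0 ha (by omega) (by omega))
          · rintro (h | ⟨h0, h1⟩) <;> omega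
  have key : ∀ a b : Fin n, G.Adj (f a) (f b) ↔
      (b.val = a.val + 1 ∨ a.val = b.val + 1 ∨ (a.val = 0 ∧ b.val = n - 1) ∨
        (b.val = 0 ∧ a.val = n - 1)) := by
    intro a b
    rcases lt_trichotomy a.val b.val with h | h | h
    · rw [key' a b h]; omega
    · have : a = b := Fin.ext h
      subst this
      simp only [G.irrefl, false_iff]
      omega
    · rw [G.adj_comm, key' b a h]; omega
  have inj' : ∀ a b : Fin n, a.val < b.val → f a ≠ f b := by
    intro a b hab
    have hbn : b.val < n := b.isLt
    rcases le_or_gt b.val p₁.length with hb | hb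
    · rw [f_lo a (by omega), f_lo b hb]
      exact h₁i a.val b.val hab hb
    · rcases le_or_gt p₁.length a.val with ha | ha
      · rw [f_hi a ha, f_hi b (by omega)]
        intro heq
        exact h₂i (n - b.val) (n - a.val) (by omega) (by omega) heq.symm
      · rw [f_lo a (by omega), f_hi b (by omega)]
        rcases Nat.eq_zero_or_pos a.val with ha0 | ha0
        · have hx : p₁.getVert a.val = p₂.getVert 0 := by
            rw [ha0, p₁.getVert_zero, p₂.getVert_zero]
          rw [hx]
          exact h₂i 0 (n - b.val) (by omega) (by omega)
        · exact hcne a.val (n - b.val) ha0 ha (by omega) (by omega)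
  have hinj : Function.Injective f := by
    intro a b heq
    by_contra hne
    rcases lt_trichotomy a.val b.val with h | h | h
    · exact inj' a b h heq
    · exact hne (Fin.ext h)
    · exact inj' b a h heq.symm
  refine hch n (by omega) ⟨⟨⟨f, hinj⟩, ?_⟩⟩
  intro a b
  show G.Adj (f a) (f b) ↔ (cycleGraph n).Adj a b
  rw [key a b, cycleGraph_adj, fin_consec, fin_consec]
  omega



/-- Reachability via a walk whose support stays in `W`. -/
def ReachIn (G : SimpleGraph V) (W : Set V) (x y : V) : Prop :=
  ∃ p : G.Walk x y, ∀ z ∈ p.support, z ∈ W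

lemma ReachIn.refl {W : Set V} {x : V} (hx : x ∈ W) : ReachIn G W x x :=
  ⟨Walk.nil, by simp [hx]⟩

lemma ReachIn.mem_left {W : Set V} {x y : V} (h : ReachIn G W x y) : x ∈ W := by
  obtain ⟨p, hp⟩ := h; exact hp x p.start_mem_support

lemma ReachIn.mem_right {W : Set V} {x y : V} (h : ReachIn G W x y) : y ∈ W := by
  obtain ⟨p, hp⟩ := h; exact hp y p.end_mem_support

lemma ReachIn.symm {W : Set V} {x y : V} (h : ReachIn G W x y) : ReachIn G W y x := by
  obtain ⟨p, hp⟩ := h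
  exact ⟨p.reverse, fun z hz => hp z (by simpa [Walk.support_reverse] using hz)⟩

lemma ReachIn.trans {W : Set V} {x y z : V} (h : ReachIn G W x y) (h' : ReachIn G W y z) :
    ReachIn G W x z := by
  obtain ⟨p, hp⟩ := h
  obtain ⟨q, hq⟩ := h'
  refine ⟨p.append q, fun u hu => ?_⟩
  rw [Walk.mem_support_append_iff] at hu
  rcases hu with hu | hu
  · exact hp u hu
  · exact hq u hu

lemma ReachIn.step {W : Set V} {x v w : V} (h : ReachIn G W x v) (hvw : G.Adj v w)
    (hw : w ∈ W) : ReachIn G W x w := by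
  obtain ⟨p, hp⟩ := h
  refine ⟨p.concat hvw, fun z hz => ?_⟩
  rw [Walk.support_concat, List.mem_append] at hz
  rcases hz with hz | hz
  · exact hp z hz
  · simp at hz; subst hz; exact hw

lemma ReachIn.mono {W W' : Set V} (hWW : W ⊆ W') {x y : V} (h : ReachIn G W x y) :
    ReachIn G W' x y := by
  obtain ⟨p, hp⟩ := h
  exact ⟨p, fun z hz => hWW (hp z hz)⟩

/-- every vertex on a `W`-walk from `x` is `W`-reachable from `x`. -/
lemma ReachIn.of_mem_support {W : Set V} {x y : V} (p : G.Walk x y)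
    (hp : ∀ z ∈ p.support, z ∈ W) {z : V} (hz : z ∈ p.support) : ReachIn G W x z := by
  obtain ⟨q, r, rfl⟩ := Walk.mem_support_iff_exists_append.mp hz
  exact ⟨q, fun u hu => hp u (by rw [Walk.mem_support_append_iff]; exact Or.inl hu)⟩

/-- Two vertices of two nonadjacent "sides" joined to both of two nonadjacent vertices
produce an induced cycle: contradiction with chordality. -/
lemma sep_clique_aux (hch : SimpleGraph.IsChordal G) {x y : V} (hxy : x ≠ y) (hnadj : ¬ G.Adj x y)
    {A B : Set V}
    (hABne : ∀ u ∈ A, ∀ v ∈ B, u ≠ v)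
    (hABna : ∀ u ∈ A, ∀ v ∈ B, ¬ G.Adj u v)
    (hAconn : ∀ u ∈ A, ∀ v ∈ A, ReachIn G A u v)
    (hBconn : ∀ u ∈ B, ∀ v ∈ B, ReachIn G B u v)
    (hxA : ∃ u ∈ A, G.Adj x u) (hyA : ∃ u ∈ A, G.Adj y u)
    (hxB : ∃ u ∈ B, G.Adj x u) (hyB : ∃ u ∈ B, G.Adj y u)
    (hxAmem : x ∉ A) (hyAmem : y ∉ A) (hxBmem : x ∉ B) (hyBmem : y ∉ B) : False := by
  -- build a walk from x to y with interior in A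
  have hWA : ∃ p : G.Walk x y, ∀ z ∈ p.support, z ∈ insert x (insert y A) := by
    obtain ⟨u, hu, hxu⟩ := hxA
    obtain ⟨v, hv, hyv⟩ := hyA
    obtain ⟨q, hq⟩ := hAconn u hu v hv
    refine ⟨Walk.cons hxu (q.concat hyv.symm), fun z hz => ?_⟩
    rw [Walk.support_cons, List.mem_cons] at hz
    rcases hz with rfl | hz
    · exact Set.mem_insert _ _
    · rw [Walk.support_concat, List.mem_append] at hz
      rcases hz with hz | hz
      · exact Set.mem_insert_of_mem _ (Set.mem_insert_of_mem _ (hq z hz))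
      · simp at hz; subst hz; exact Set.mem_insert_of_mem _ (Set.mem_insert _ _)
  have hWB : ∃ p : G.Walk x y, ∀ z ∈ p.support, z ∈ insert x (insert y B) := by
    obtain ⟨u, hu, hxu⟩ := hxB
    obtain ⟨v, hv, hyv⟩ := hyB
    obtain ⟨q, hq⟩ := hBconn u hu v hv
    refine ⟨Walk.cons hxu (q.concat hyv.symm), fun z hz => ?_⟩
    rw [Walk.support_cons, List.mem_cons] at hz
    rcases hz with rfl | hz
    · exact Set.mem_insert _ _
    · rw [Walk.support_concat, List.mem_append] at hz
      rcases hz with hz | hz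
      · exact Set.mem_insert_of_mem _ (Set.mem_insert_of_mem _ (hq z hz))
      · simp at hz; subst hz; exact Set.mem_insert_of_mem _ (Set.mem_insert _ _)
  obtain ⟨p₁, h₁W, h₁i, h₁c⟩ := exists_minWalk hWA
  obtain ⟨p₂, h₂W, h₂i, h₂c⟩ := exists_minWalk hWB
  -- interiors lie in A resp. B
  have hint₁ : ∀ i : ℕ, 0 < i → i < p₁.length → p₁.getVert i ∈ A := by
    intro i h0 hl
    have hmem := h₁W _ (Walk.mem_support_iff_exists_getVert.2 ⟨i, rfl, by omega⟩)
    rcases hmem with h | h | h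
    · exact absurd (p₁.getVert_zero ▸ (h₁i 0 i h0 (by omega))) (by rw [h]; simp)
    · exact absurd (p₁.getVert_length ▸ (h₁i i p₁.length hl le_rfl)) (by rw [h]; simp)
    · exact h
  have hint₂ : ∀ i : ℕ, 0 < i → i < p₂.length → p₂.getVert i ∈ B := by
    intro i h0 hl
    have hmem := h₂W _ (Walk.mem_support_iff_exists_getVert.2 ⟨i, rfl, by omega⟩)
    rcases hmem with h | h | h
    · exact absurd (p₂.getVert_zero ▸ (h₂i 0 i h0 (by omega))) (by rw [h]; simp)
    · exact absurd (p₂.getVert_length ▸ (h₂i i p₂.length hl le_rfl)) (by rw [h]; simp)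
    · exact h
  exact no_two_paths hch hxy hnadj p₁ p₂ h₁i h₁c h₂i h₂c
    (fun i j hi hil hj hjl => hABne _ (hint₁ i hi hil) _ (hint₂ j hj hjl))
    (fun i j hi hil hj hjl => hABna _ (hint₁ i hi hil) _ (hint₂ j hj hjl))

def Simpl (G : SimpleGraph V) (v : V) : Prop :=
  ∀ a b : V, G.Adj v a → G.Adj v b → a ≠ b → G.Adj a b

lemma chordal_induce (hch : SimpleGraph.IsChordal G) (s : Set V) : SimpleGraph.IsChordal (G.induce s) :=
  fun n hn ⟨e⟩ => hch n hn ⟨(Embedding.induce s).comp e⟩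

lemma simpl_transfer {s : Set V} (u : s) (hs : Simpl (G.induce s) u)
    (hnb : ∀ w, G.Adj ↑u w → w ∈ s) : Simpl G ↑u := by
  intro c d hc hd hcd
  have hcs := hnb c hc
  have hds := hnb d hd
  have := hs ⟨c, hcs⟩ ⟨d, hds⟩ (by simpa using hc) (by simpa using hd)
    (by simp [Subtype.ext_iff, hcd])
  simpa using this

lemma walk_pair {a b : V} (hab : a ≠ b) (hnadj : ¬ G.Adj a b) (p : G.Walk a b)
    (hp : ∀ z ∈ p.support, z = a ∨ z = b) : False := by
  cases p with
  | nil => exact hab rfl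
  | cons h q =>
    rename_i c
    have hc : c = a ∨ c = b := hp c (by simp)
    rcases hc with rfl | rfl
    · exact G.irrefl h
    · exact hnadj h

lemma nbr_of_walk [DecidableEq V] {c s : V} (S : Finset V) (q : G.Walk c s) (hc : c ≠ s)
    (hsupp : ∀ z ∈ q.support, z ∉ S.erase s) (hcount : q.support.count s = 1) :
    ∃ v : V, G.Adj s v ∧ ReachIn G {u | u ∉ S} c v := by
  have hnil : ¬ q.reverse.Nil := by
    rw [Walk.nil_iff_length_eq, Walk.length_reverse]
    intro h
    exact hc (Walk.eq_of_length_eq_zero h)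
  set r := q.reverse with hr
  refine ⟨r.getVert 1, r.adj_snd hnil, ?_⟩
  have htail : r.tail.support = r.support.tail := Walk.support_tail_of_not_nil r hnil
  have hrsupp : r.support = s :: r.support.tail := r.support_eq_cons
  have hsna : s ∉ r.support.tail := by
    intro hmem
    have : 2 ≤ r.support.count s := by
      rw [hrsupp]
      rw [List.count_cons_self]
      have := List.count_pos_iff.2 hmem  -- 1 ≤ count in tail
      omega
    have : r.support.count s = 1 := by
      rwa [hr, Walk.support_reverse, List.count_reverse]
    omega
  refine ⟨r.tail.reverse, fun z hz => ?_⟩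
  rw [Walk.support_reverse, List.mem_reverse, htail] at hz
  have hzq : z ∈ q.support := by
    have : z ∈ r.support := List.mem_of_mem_tail hz
    rwa [hr, Walk.support_reverse, List.mem_reverse] at this
  have hzs : z ≠ s := fun h => hsna (h ▸ hz)
  intro hzS
  exact hsupp z hzq (Finset.mem_erase.2 ⟨hzs, hzS⟩)


lemma dirac : ∀ (N : ℕ) (V : Type) [Fintype V] (G : SimpleGraph V), Fintype.card V ≤ N →
    SimpleGraph.IsChordal G → ∀ a b : V, a ≠ b → ¬ G.Adj a b →
    ∃ u w : V, Simpl G u ∧ Simpl G w ∧ u ≠ w ∧ ¬ G.Adj u w := by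
  intro N
  induction N with
  | zero =>
    intro V _ G hcard _ a _ _ _
    have : IsEmpty V := Fintype.card_eq_zero_iff.mp (le_antisymm hcard (Nat.zero_le _))
    exact this.elim a
  | succ N ih =>
    intro V _ G hcard hch a b hab hnadj
    classical
    set P : Finset V → Prop :=
      fun S => a ∉ S ∧ b ∉ S ∧ ¬ ReachIn G {v | v ∉ S} a b with hP
    have hPuniv : P (Finset.univ \ {a, b}) := by
      refine ⟨by simp, by simp, ?_⟩
      rintro ⟨p, hp⟩
      refine walk_pair hab hnadj p (fun z hz => ?_)
      have := hp z hz
      simp only [Set.mem_setOf_eq, Finset.mem_sdiff, Finset.mem_univ, true_and, not_not,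
        Finset.mem_insert, Finset.mem_singleton] at this
      exact this
    have hKne : Set.Nonempty {k | ∃ S, P S ∧ S.card = k} := ⟨_, _, hPuniv, rfl⟩
    obtain ⟨S, hPS, hScard⟩ := Nat.sInf_mem hKne
    have hSmin : ∀ S', P S' → S.card ≤ S'.card := fun S' h => by
      rw [hScard]; exact Nat.sInf_le ⟨S', h, rfl⟩
    obtain ⟨haS, hbS, hSsep⟩ := hPS
    set W : Set V := {v | v ∉ S} with hW
    set A : Set V := {v | ReachIn G W a v} with hA
    set B : Set V := {v | ReachIn G W b v} with hB
    have haA : a ∈ A := ReachIn.refl haS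
    have hbB : b ∈ B := ReachIn.refl hbS
    have hAW : ∀ v ∈ A, v ∉ S := fun v hv => ReachIn.mem_right hv
    have hBW : ∀ v ∈ B, v ∉ S := fun v hv => ReachIn.mem_right hv
    have hAclosed : ∀ v ∈ A, ∀ w, G.Adj v w → w ∉ S → w ∈ A :=
      fun v hv w hvw hw => ReachIn.step hv hvw hw
    have hBclosed : ∀ v ∈ B, ∀ w, G.Adj v w → w ∉ S → w ∈ B :=
      fun v hv w hvw hw => ReachIn.step hv hvw hw
    have hABdisj : ∀ v, v ∈ A → v ∈ B → False :=
      fun v hva hvb => hSsep (ReachIn.trans hva (ReachIn.symm hvb))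
    have hABadj : ∀ u ∈ A, ∀ v ∈ B, ¬ G.Adj u v :=
      fun u hu v hv huv => hABdisj v (hAclosed u hu v huv (hBW v hv)) hv
    have hbA : b ∉ A := fun h => hSsep h
    have haB : a ∉ B := fun h => hSsep (ReachIn.symm h)
    have hnbr : ∀ s ∈ S, (∃ v ∈ A, G.Adj s v) ∧ (∃ v ∈ B, G.Adj s v) := by
      intro s hs
      have hPerase : ¬ P (S.erase s) := by
        intro h
        have h1 := hSmin _ h
        have h2 := Finset.card_erase_of_mem hs
        have hpos : 0 < S.card := Finset.card_pos.2 ⟨s, hs⟩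
        omega
      have hreach : ReachIn G {v | v ∉ S.erase s} a b := by
        by_contra h
        exact hPerase ⟨fun hmem => haS (Finset.mem_of_mem_erase hmem),
          fun hmem => hbS (Finset.mem_of_mem_erase hmem), h⟩
      obtain ⟨p, hp⟩ := hreach
      have hsp : s ∈ p.support := by
        by_contra hsp
        refine hSsep ⟨p, fun z hz hzS => ?_⟩
        have hzs : z ≠ s := fun h => hsp (h ▸ hz)
        exact hp z hz (Finset.mem_erase.2 ⟨hzs, hzS⟩)
      constructor
      · have has : a ≠ s := fun h => haS (h ▸ hs)
        obtain ⟨v, hadj, hre⟩ := nbr_of_walk S (p.takeUntil s hsp) has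
          (fun z hz => hp z (p.support_takeUntil_subset hsp hz))
          (p.count_support_takeUntil_eq_one hsp)
        exact ⟨v, hre, hadj⟩
      · have hbs : b ≠ s := fun h => hbS (h ▸ hs)
        have hsp' : s ∈ p.reverse.support := by
          rwa [Walk.support_reverse, List.mem_reverse]
        obtain ⟨v, hadj, hre⟩ := nbr_of_walk S (p.reverse.takeUntil s hsp') hbs
          (fun z hz => by
            have h2 := p.reverse.support_takeUntil_subset hsp' hz
            rw [Walk.support_reverse, List.mem_reverse] at h2
            exact hp z h2)
          (p.reverse.count_support_takeUntil_eq_one hsp')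
        exact ⟨v, hre, hadj⟩
    have hSclique : ∀ x ∈ S, ∀ y ∈ S, x ≠ y → G.Adj x y := by
      intro x hx y hy hxy
      by_contra hna
      have hAconn : ∀ u ∈ A, ∀ v ∈ A, ReachIn G A u v := by
        intro u hu v hv
        obtain ⟨p, hp⟩ := hu
        obtain ⟨q, hq⟩ := hv
        have hpA : ∀ z ∈ p.support, z ∈ A := fun z hz => ReachIn.of_mem_support p hp hz
        have hqA : ∀ z ∈ q.support, z ∈ A := fun z hz => ReachIn.of_mem_support q hq hz
        refine ReachIn.trans (ReachIn.symm ⟨p, hpA⟩) ⟨q, hqA⟩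
      have hBconn : ∀ u ∈ B, ∀ v ∈ B, ReachIn G B u v := by
        intro u hu v hv
        obtain ⟨p, hp⟩ := hu
        obtain ⟨q, hq⟩ := hv
        have hpB : ∀ z ∈ p.support, z ∈ B := fun z hz => ReachIn.of_mem_support p hp hz
        have hqB : ∀ z ∈ q.support, z ∈ B := fun z hz => ReachIn.of_mem_support q hq hz
        refine ReachIn.trans (ReachIn.symm ⟨p, hpB⟩) ⟨q, hqB⟩
      exact sep_clique_aux hch hxy hna
        (fun u hu v hv h => hABdisj u hu (h ▸ hv))
        hABadj hAconn hBconn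
        ((hnbr x hx).1) ((hnbr y hy).1) ((hnbr x hx).2) ((hnbr y hy).2)
        (fun h => hAW x h hx) (fun h => hAW y h hy)
        (fun h => hBW x h hx) (fun h => hBW y h hy)
    have main : ∀ (C : Set V) (c z : V), c ∈ C → z ∉ C → z ∉ S →
        (∀ v ∈ C, v ∉ S) → (∀ v ∈ C, ∀ w, G.Adj v w → w ∉ S → w ∈ C) →
        ∃ u, u ∈ C ∧ Simpl G u := by
      intro C c z hc hzC hzS hCS hCcl
      set t : Set V := C ∪ ↑S with htdef
      have hct : c ∈ t := Set.mem_union_left _ hc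
      have hzt : z ∉ t := by
        intro h
        rcases (Set.mem_union _ _ _).1 h with h | h
        · exact hzC h
        · exact hzS h
      have hcard' : Fintype.card ↥t < Fintype.card V := by
        refine Fintype.card_lt_of_injective_of_notMem (fun x : ↥t => (x : V))
          Subtype.val_injective (b := z) ?_
        rintro ⟨x, rfl⟩
        exact hzt x.2
      have hcht := chordal_induce hch t
      have hnb : ∀ (u : ↥t), (u : V) ∈ C → ∀ w, G.Adj ↑u w → w ∈ t := by
        intro u huC w hw
        by_cases hwS : w ∈ S
        · exact Set.mem_union_right _ hwS
        · exact Set.mem_union_left _ (hCcl _ huC w hw hwS)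
      by_cases hcomp : ∀ u w : ↥t, u ≠ w → (G.induce t).Adj u w
      · refine ⟨c, hc, ?_⟩
        have hsim : Simpl (G.induce t) ⟨c, hct⟩ := fun a' b' _ _ h => hcomp a' b' h
        exact simpl_transfer ⟨c, hct⟩ hsim (hnb ⟨c, hct⟩ hc)
      · push_neg at hcomp
        obtain ⟨u, w, huw, hnadj'⟩ := hcomp
        obtain ⟨u', w', hsu, hsw, hne', hnadj''⟩ :=
          ih ↥t (G.induce t) (by omega) hcht u w huw hnadj'
        have hnotboth : ¬ ((u' : V) ∈ S ∧ (w' : V) ∈ S) := by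
          rintro ⟨h1, h2⟩
          have hne2 : (u' : V) ≠ (w' : V) := fun h => hne' (Subtype.ext h)
          exact hnadj'' (by simpa using hSclique _ h1 _ h2 hne2)
        have hpick : ∃ (d : ↥t), (d : V) ∈ C ∧ Simpl (G.induce t) d := by
          rcases (Set.mem_union _ _ _).1 u'.2 with h | h
          · exact ⟨u', h, hsu⟩
          · rcases (Set.mem_union _ _ _).1 w'.2 with h2 | h2
            · exact ⟨w', h2, hsw⟩
            · exact absurd ⟨h, h2⟩ hnotboth
        obtain ⟨d, hdC, hds⟩ := hpick
        exact ⟨d, hdC, simpl_transfer d hds (hnb d hdC)⟩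
    obtain ⟨uA, huA, hsA⟩ := main A a b haA hbA hbS hAW hAclosed
    obtain ⟨uB, huB, hsB⟩ := main B b a hbB haB haS hBW hBclosed
    exact ⟨uA, uB, hsA, hsB, fun h => hABdisj uA huA (h ▸ huB), hABadj uA huA uB huB⟩

lemma exists_simpl (V : Type) [Fintype V] [Nonempty V] (G : SimpleGraph V)
    (hch : SimpleGraph.IsChordal G) : ∃ u : V, Simpl G u := by
  by_cases hcomp : ∀ u w : V, u ≠ w → G.Adj u w
  · exact ⟨Classical.arbitrary V, fun c d _ _ hcd => hcomp c d hcd⟩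
  · push_neg at hcomp
    obtain ⟨u, w, huw, hnadj⟩ := hcomp
    obtain ⟨u', _, hsu, _, _, _⟩ := dirac (Fintype.card V) V G le_rfl hch u w huw hnadj
    exact ⟨u', hsu⟩

lemma clique_card_le {p : ℕ} (hfree : G.CliqueFree p) (T : Finset V)
    (hT : ∀ x ∈ T, ∀ y ∈ T, x ≠ y → G.Adj x y) : T.card ≤ p - 1 := by
  by_contra h
  push_neg at h
  have hple : p ≤ T.card := by
    rcases Nat.eq_zero_or_pos p with rfl | hp
    · exact Nat.zero_le _
    · omega
  obtain ⟨T', hT'sub, hT'card⟩ := Finset.exists_subset_card_eq hple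
  exact hfree T' ⟨fun x hx y hy hxy => hT x (hT'sub hx) y (hT'sub hy) hxy, hT'card⟩

lemma colorable_aux (p : ℕ) (hp : 1 < p) : ∀ (N : ℕ) (V : Type) [Fintype V]
    (G : SimpleGraph V), Fintype.card V ≤ N → SimpleGraph.IsChordal G → G.CliqueFree p →
    G.Colorable (p - 1) := by
  intro N
  induction N with
  | zero =>
    intro V _ G hcard _ _
    haveI : IsEmpty V := Fintype.card_eq_zero_iff.mp (le_antisymm hcard (Nat.zero_le _))
    exact SimpleGraph.Colorable.of_isEmpty _
  | succ N ih =>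
    intro V _ G hcard hch hfree
    classical
    cases isEmpty_or_nonempty V with
    | inl h => exact SimpleGraph.Colorable.of_isEmpty _
    | inr h =>
      obtain ⟨v, hv⟩ := exists_simpl V G hch
      obtain ⟨t, ht⟩ : ∃ t : Set V, t = {w | w ≠ v} := ⟨_, rfl⟩
      have hmemt : ∀ w : V, w ∈ t ↔ w ≠ v := fun w => by rw [ht]; exact Iff.rfl
      have hcard' : Fintype.card ↥t < Fintype.card V := by
        refine Fintype.card_lt_of_injective_of_notMem (fun x : ↥t => (x : V))
          Subtype.val_injective (b := v) ?_
        rintro ⟨x, rfl⟩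
        exact (hmemt _).1 x.2 rfl
      obtain ⟨C⟩ := ih ↥t (G.induce t) (by omega) (chordal_induce hch t)
        (hfree.comap (Embedding.induce t).isContained)
      have hvnot : v ∉ G.neighborFinset v := by simp
      have hdeg : (insert v (G.neighborFinset v)).card ≤ p - 1 := by
        refine clique_card_le hfree _ ?_
        intro x hx y hy hxy
        rcases Finset.mem_insert.1 hx with rfl | hx
        · rcases Finset.mem_insert.1 hy with rfl | hy
          · exact absurd rfl hxy
          · exact (G.mem_neighborFinset _ _).1 hy
        · rcases Finset.mem_insert.1 hy with rfl | hy
          · exact ((G.mem_neighborFinset _ _).1 hx).symm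
          · exact hv x y ((G.mem_neighborFinset _ _).1 hx) ((G.mem_neighborFinset _ _).1 hy) hxy
      have hdeg2 : (G.neighborFinset v).card ≤ p - 2 := by
        rw [Finset.card_insert_of_notMem hvnot] at hdeg
        omega
      have hex : ∃ c0 : Fin (p - 1), ∀ (w : V) (hw : G.Adj v w),
          c0 ≠ C ⟨w, (hmemt _).2 hw.ne'⟩ := by
        obtain ⟨T, hT⟩ : ∃ T : Finset (Fin (p - 1)), T = (G.neighborFinset v).attach.image
            (fun w => C ⟨w.1, (hmemt _).2 ((G.mem_neighborFinset _ _).1 w.2).ne'⟩) := ⟨_, rfl⟩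
        have hTcard : T.card < p - 1 := by
          have h1 : T.card ≤ (G.neighborFinset v).attach.card := by
            rw [hT]; exact Finset.card_image_le
          rw [Finset.card_attach] at h1
          omega
        have hex' : ∃ c0 : Fin (p - 1), c0 ∉ T := by
          by_contra hco
          push_neg at hco
          have hsub : (Finset.univ : Finset (Fin (p - 1))) ⊆ T := fun c _ => hco c
          have := Finset.card_le_card hsub
          rw [Finset.card_univ, Fintype.card_fin] at this
          omega
        obtain ⟨c0, hc0⟩ := hex'
        refine ⟨c0, fun w hw heq => hc0 ?_⟩
        rw [hT, heq]
        exact Finset.mem_image.2 ⟨⟨w, (G.mem_neighborFinset _ _).2 hw⟩, Finset.mem_attach _ _, rfl⟩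
      obtain ⟨c0, hc0⟩ := hex
      refine ⟨Coloring.mk (fun w => if hh : w = v then c0 else C ⟨w, (hmemt _).2 hh⟩) ?_⟩
      intro x y hxy
      by_cases hx : x = v
      · have hy : y ≠ v := fun hh => hxy.ne (hx.trans hh.symm)
        simp only [dif_pos hx, dif_neg hy]
        exact hc0 y (by rw [← hx]; exact hxy)
      · by_cases hy : y = v
        · simp only [dif_pos hy, dif_neg hx]
          exact fun heq => hc0 x (by rw [← hy]; exact hxy.symm) heq.symm
        · simp only [dif_neg hx, dif_neg hy]
          have hadj : (G.induce t).Adj ⟨x, (hmemt _).2 hx⟩ ⟨y, (hmemt _).2 hy⟩ := by simpa using hxy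
          exact fun heq => C.valid hadj heq

end Chordal19

theorem stmt19 {V : Type} [Fintype V] (G : SimpleGraph V)
    (hchordal : G.IsChordal) (p : ℕ) (hp : 1 < p) :
    (¬ ∃ s : Finset V, G.IsNClique p s) ↔ G.Colorable (p - 1) := by
  constructor
  · intro h
    have hfree : G.CliqueFree p := fun s hs => h ⟨s, hs⟩
    exact Chordal19.colorable_aux p hp (Fintype.card V) V G le_rfl hchordal hfree
  · rintro hc ⟨s, hs⟩
    exact (hc.cliqueFree (by omega)) s hs
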